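/- arXiv:1912.03994 — 3 statements merged into one kernel-verified Lean document; each statement's English description precedes it below -/
import Mathlib

section
/- Both 𝒫_∞ and ℬ are Gδ subsets of 𝒫. -/
open Filter Topology

noncomputable section

/-- `V` is the ℚ-vector space of finitely supported sequences of rational numbers. -/
abbrev V : Type := ℕ →₀ ℚ

/-- The canonical basis vectors of `V`. -/
def eV (n : ℕ) : V := Finsupp.single n 1

/-- A ℚ-seminorm (pseudonorm) on `V`. -/
def IsQSeminorm (μ : V → ℝ) : Prop :=
  (∀ (q : ℚ) (v : V), μ (q • v) = |(q : ℝ)| * μ v) ∧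
    ∀ v w : V, μ (v + w) ≤ μ v + μ w

/-- The Polish space `𝒫` of pseudonorms on `V`, topologized as a subspace of `ℝ^V`
(pointwise convergence). -/
abbrev SpaceP : Type := {μ : V → ℝ // IsQSeminorm μ}

/-- `𝒫_∞`: pseudonorms inducing an infinite-dimensional Banach space. -/
def SetPinf : Set SpaceP :=
  {μ | ∀ n : ℕ, ∃ v : Fin n → V, ∃ c : ℝ, 0 < c ∧
    ∀ a : Fin n → ℚ, c * (∑ i, |(a i : ℝ)|) ≤ μ.1 (∑ i, a i • v i)}

/-- `ℬ`: pseudonorms for which the canonical basis vectors stay linearly independent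
in the induced Banach space. -/
def SetB : Set SpaceP :=
  {μ | ∀ n : ℕ, ∃ c : ℝ, 0 < c ∧
    ∀ a : Fin n → ℚ, c * (∑ i, |(a i : ℝ)|) ≤ μ.1 (∑ i, a i • eV i)}

/-- `μ ∈ 𝒫` represents the Banach space `X` isometrically: the Banach space `X_μ`
induced by `μ` is linearly isometric to `X`. -/
def RepIsometric (X : Type*) [NormedAddCommGroup X] [NormedSpace ℝ X] (μ : SpaceP) : Prop :=
  ∃ T : V → X,
    (∀ v w : V, T (v + w) = T v + T w) ∧
    (∀ (q : ℚ) (v : V), T (q • v) = (q : ℝ) • T v) ∧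
    (∀ v : V, ‖T v‖ = μ.1 v) ∧
    Dense (Submodule.span ℝ (Set.range T) : Set X)

lemma qsn_zero {μ : V → ℝ} (h : IsQSeminorm μ) : μ 0 = 0 := by
  simpa using h.1 0 0

lemma qsn_nonneg {μ : V → ℝ} (h : IsQSeminorm μ) (v : V) : 0 ≤ μ v := by
  have h2 := h.2 v ((-1 : ℚ) • v)
  have h1 := h.1 (-1) v
  have h0 : v + (-1 : ℚ) • v = 0 := by simp
  rw [h0, qsn_zero h] at h2
  simp at h1 h2
  linarith

lemma qsn_sum_le {μ : V → ℝ} (h : IsQSeminorm μ) {ι : Type*} (s : Finset ι) (f : ι → V) :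
    μ (∑ i ∈ s, f i) ≤ ∑ i ∈ s, μ (f i) := by
  classical
  induction s using Finset.induction_on with
  | empty => simp [qsn_zero h]
  | insert _ _ hx ih =>
    rw [Finset.sum_insert hx, Finset.sum_insert hx]
    exact (h.2 _ _).trans (add_le_add_right ih _)

lemma qsn_sub {μ : V → ℝ} (h : IsQSeminorm μ) (x y : V) : μ x - μ y ≤ μ (x - y) := by
  have h2 := h.2 (x - y) y
  simp at h2
  linarith

def Wset (n : ℕ) (v : Fin n → V) : Set SpaceP :=
  {μ | ∃ c : ℝ, 0 < c ∧
    ∀ a : Fin n → ℚ, c * (∑ i, |(a i : ℝ)|) ≤ μ.1 (∑ i, a i • v i)}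

lemma isOpen_Wset (n : ℕ) (v : Fin n → V) : IsOpen (Wset n v) := by
  classical
  rw [isOpen_iff_mem_nhds]
  rintro μ₀ ⟨c, hc, hA⟩
  set M : ℝ := ∑ i, μ₀.1 (v i) with hMdef
  have hM0 : 0 ≤ M := Finset.sum_nonneg fun i _ => qsn_nonneg μ₀.2 _
  obtain ⟨k, hk⟩ := exists_nat_gt (8 * (n + 1) * (M + c + 1) / c)
  have hkpos : (0 : ℝ) < k := lt_of_le_of_lt (by positivity) hk
  have hkQ : (0 : ℚ) < k := by exact_mod_cast hkpos
  set δ : ℝ := c / 8 with hδdef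
  have hδpos : 0 < δ := by positivity
  set Net : Finset (Fin n → ℚ) :=
    (Fintype.piFinset fun _ : Fin n => Finset.Icc (-(k : ℤ)) (k : ℤ)).image
      (fun m i => ((m i : ℚ)) / k) with hNetdef
  set S : Finset V := Net.image (fun b => ∑ i, b i • v i) ∪ Finset.image v Finset.univ with hSdef
  set O : Set SpaceP := {μ | ∀ x ∈ S, |μ.1 x - μ₀.1 x| < δ} with hOdef
  have hOopen : IsOpen O := by
    have hEq : O = ⋂ x ∈ S, {μ : SpaceP | |μ.1 x - μ₀.1 x| < δ} := by
      ext μ; simp [hOdef]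
    rw [hEq]
    refine isOpen_biInter_finset fun x _ => ?_
    have hcont : Continuous fun μ : SpaceP => |μ.1 x - μ₀.1 x| :=
      (((continuous_apply x).comp continuous_subtype_val).sub continuous_const).abs
    exact isOpen_lt hcont continuous_const
  have hμ₀O : μ₀ ∈ O := fun x _ => by simpa using hδpos
  refine Filter.mem_of_superset (hOopen.mem_nhds hμ₀O) ?_
  intro μ hμ
  -- key estimate for normalized coefficient vectors
  have key : ∀ a' : Fin n → ℚ, (∑ i, |a' i|) = 1 → c / 2 ≤ μ.1 (∑ i, a' i • v i) := by
    intro a' ha'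
    have ha'le : ∀ i, |a' i| ≤ 1 := by
      intro i
      calc |a' i| ≤ ∑ j, |a' j| :=
            Finset.single_le_sum (f := fun j => |a' j|) (fun j _ => abs_nonneg _)
              (Finset.mem_univ i)
        _ = 1 := ha'
    set m : Fin n → ℤ := fun i => ⌊(k : ℚ) * a' i⌋ with hmdef
    set b : Fin n → ℚ := fun i => ((m i : ℚ)) / k with hbdef
    have hfl : ∀ i, b i ≤ a' i ∧ a' i - b i ≤ 1 / (k : ℚ) := by
      intro i
      have h1 : ((m i : ℚ)) ≤ (k : ℚ) * a' i := Int.floor_le _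
      have h2 : (k : ℚ) * a' i < (m i : ℚ) + 1 := Int.lt_floor_add_one _
      constructor
      · rw [hbdef, div_le_iff₀ hkQ]
        have := mul_comm (a' i) (k : ℚ)
        linarith
      · rw [hbdef, sub_le_iff_le_add, ← add_div, le_div_iff₀ hkQ]
        have := mul_comm (a' i) (k : ℚ)
        linarith
    have hbNet : b ∈ Net := by
      rw [hNetdef]
      refine Finset.mem_image.2 ⟨m, ?_, rfl⟩
      rw [Fintype.mem_piFinset]
      intro i
      rw [Finset.mem_Icc]
      constructor
      · rw [hmdef]
        refine Int.le_floor.2 ?_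
        push_cast
        nlinarith [neg_abs_le (a' i), ha'le i]
      · have h1 : ((m i : ℚ)) ≤ (k : ℚ) * a' i := Int.floor_le _
        have h2 : (k : ℚ) * a' i ≤ (k : ℚ) := by nlinarith [le_abs_self (a' i), ha'le i]
        exact_mod_cast h1.trans h2
    have hxS : (∑ i, b i • v i) ∈ S := by
      rw [hSdef]
      exact Finset.mem_union_left _ (Finset.mem_image_of_mem _ hbNet)
    have hviS : ∀ i, v i ∈ S := fun i => by
      rw [hSdef]
      exact Finset.mem_union_right _ (Finset.mem_image_of_mem v (Finset.mem_univ i))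
    -- real versions of the floor bounds
    have hflR : ∀ i, |((b i - a' i : ℚ) : ℝ)| ≤ 1 / (k : ℝ) := by
      intro i
      have h1 := (hfl i).1
      have h2 := (hfl i).2
      rw [abs_le]
      constructor
      · have : -(1 / (k : ℚ)) ≤ b i - a' i := by linarith
        have := (Rat.cast_le (K := ℝ)).2 this
        push_cast at this ⊢
        linarith
      · have : b i - a' i ≤ 1 / (k : ℚ) := by linarith
        have := (Rat.cast_le (K := ℝ)).2 this
        push_cast at this ⊢
        linarith
    have habsR : ∀ i, |(a' i : ℝ)| - 1 / (k : ℝ) ≤ |(b i : ℝ)| := by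
      intro i
      have h := hflR i
      have h3 : |(a' i : ℝ)| - |(b i : ℝ)| ≤ |((a' i : ℝ)) - ((b i : ℝ))| :=
        abs_sub_abs_le_abs_sub _ _
      have h4 : |((a' i : ℝ)) - ((b i : ℝ))| = |((b i - a' i : ℚ) : ℝ)| := by
        push_cast
        rw [abs_sub_comm]
      linarith
    have ha'R : (∑ i, |(a' i : ℝ)|) = 1 := by
      have := congrArg (fun q : ℚ => (q : ℝ)) ha'
      push_cast at this
      exact this
    -- lower bound for μ₀ at net point
    have h2 : c * (1 - (n : ℝ) * (1 / (k : ℝ))) ≤ μ₀.1 (∑ i, b i • v i) := by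
      have hs : (1 : ℝ) - (n : ℝ) * (1 / (k : ℝ)) ≤ ∑ i, |(b i : ℝ)| := by
        calc (1 : ℝ) - (n : ℝ) * (1 / (k : ℝ))
            = ∑ i : Fin n, (|(a' i : ℝ)| - 1 / (k : ℝ)) := by
              rw [Finset.sum_sub_distrib, ha'R]
              simp [Finset.card_univ]
          _ ≤ ∑ i, |(b i : ℝ)| := Finset.sum_le_sum fun i _ => habsR i
      have := hA b
      nlinarith
    have h3 : |μ.1 (∑ i, b i • v i) - μ₀.1 (∑ i, b i • v i)| < δ := hμ _ hxS
    have h4 : ∀ i, μ.1 (v i) ≤ μ₀.1 (v i) + δ := fun i => by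
      have := hμ _ (hviS i)
      have := abs_lt.1 this
      linarith [this.2]
    -- Lipschitz step
    have h5 : μ.1 (∑ i, b i • v i) - μ.1 (∑ i, a' i • v i) ≤
        ∑ i, |((b i - a' i : ℚ) : ℝ)| * μ.1 (v i) := by
      have hsub := qsn_sub μ.2 (∑ i, b i • v i) (∑ i, a' i • v i)
      have hEq : (∑ i, b i • v i) - (∑ i, a' i • v i) = ∑ i, (b i - a' i) • v i := by
        rw [← Finset.sum_sub_distrib]
        exact Finset.sum_congr rfl fun i _ => (sub_smul _ _ _).symm
      rw [hEq] at hsub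
      refine hsub.trans ?_
      calc μ.1 (∑ i, (b i - a' i) • v i) ≤ ∑ i, μ.1 ((b i - a' i) • v i) :=
            qsn_sum_le μ.2 _ _
        _ = ∑ i, |((b i - a' i : ℚ) : ℝ)| * μ.1 (v i) :=
            Finset.sum_congr rfl fun i _ => μ.2.1 _ _
    have h6 : ∑ i, |((b i - a' i : ℚ) : ℝ)| * μ.1 (v i) ≤ (1 / (k : ℝ)) * (M + n * δ) := by
      have hterm : ∀ i ∈ Finset.univ, |((b i - a' i : ℚ) : ℝ)| * μ.1 (v i) ≤
          (1 / (k : ℝ)) * (μ₀.1 (v i) + δ) := by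
        intro i _
        refine mul_le_mul (hflR i) (h4 i) (qsn_nonneg μ.2 _) (by positivity)
      calc ∑ i, |((b i - a' i : ℚ) : ℝ)| * μ.1 (v i)
          ≤ ∑ i : Fin n, (1 / (k : ℝ)) * (μ₀.1 (v i) + δ) := Finset.sum_le_sum hterm
        _ = (1 / (k : ℝ)) * (M + n * δ) := by
            rw [← Finset.mul_sum, Finset.sum_add_distrib]
            simp [hMdef, Finset.card_univ, mul_comm]
    -- final arithmetic
    have hk' : 8 * ((n : ℝ) + 1) * (M + c + 1) < c * k := by
      rw [div_lt_iff₀ hc] at hk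
      linarith [hk]
    have htk : (1 / (k : ℝ)) * k = 1 := by field_simp
    have htpos : 0 < 1 / (k : ℝ) := by positivity
    have hn0 : (0 : ℝ) ≤ n := Nat.cast_nonneg n
    have harith : c / 2 ≤ c * (1 - (n : ℝ) * (1 / (k : ℝ))) - δ - (1 / (k : ℝ)) * (M + n * δ) := by
      have hmul : (1 / (k : ℝ)) * (8 * ((n : ℝ) + 1) * (M + c + 1)) < c := by
        calc (1 / (k : ℝ)) * (8 * ((n : ℝ) + 1) * (M + c + 1))
            < (1 / (k : ℝ)) * (c * k) := mul_lt_mul_of_pos_left hk' htpos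
          _ = c := by field_simp
      rw [hδdef]
      nlinarith [mul_nonneg (mul_nonneg htpos.le hn0) hc.le,
        mul_nonneg htpos.le hM0, mul_nonneg htpos.le hc.le, htpos.le]
    have habs3 := abs_lt.1 h3
    linarith [habs3.1, habs3.2]
  -- general coefficient vectors by homogeneity
  refine ⟨c / 2, by positivity, fun a => ?_⟩
  set s : ℚ := ∑ i, |a i| with hsdef
  have hs0 : 0 ≤ s := Finset.sum_nonneg fun i _ => abs_nonneg _
  have hscast : ((s : ℚ) : ℝ) = ∑ i, |(a i : ℝ)| := by
    rw [hsdef]; push_cast; rfl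
  rcases eq_or_lt_of_le hs0 with h0 | hs
  · have hz : ∀ i ∈ Finset.univ, |a i| = 0 :=
      (Finset.sum_eq_zero_iff_of_nonneg fun i _ => abs_nonneg _).1 h0.symm
    have hz' : ∀ i, a i = 0 := fun i => abs_eq_zero.1 (hz i (Finset.mem_univ i))
    simp [hz', qsn_zero μ.2]
  · set a' : Fin n → ℚ := fun i => a i / s with ha'def
    have ha' : ∑ i, |a' i| = 1 := by
      rw [ha'def]
      simp only [abs_div, abs_of_pos hs]
      rw [← Finset.sum_div, ← hsdef, div_self (ne_of_gt hs)]
    have hsum : (∑ i, a i • v i) = s • ∑ i, a' i • v i := by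
      rw [Finset.smul_sum]
      refine Finset.sum_congr rfl fun i _ => ?_
      rw [smul_smul]
      congr 1
      simp only [ha'def]
      field_simp
    have hkey := key a' ha'
    have hμeq : μ.1 (∑ i, a i • v i) = (s : ℝ) * μ.1 (∑ i, a' i • v i) := by
      rw [hsum, μ.2.1 s _, abs_of_pos (by exact_mod_cast hs)]
    rw [hμeq, ← hscast]
    have hsR : (0 : ℝ) < (s : ℝ) := by exact_mod_cast hs
    nlinarith

/-- Both `𝒫_∞` and `ℬ` are Gδ subsets of `𝒫`. -/
theorem statement1 : IsGδ SetPinf ∧ IsGδ SetB := by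
  constructor
  · have hEq : SetPinf = ⋂ n : ℕ, ⋃ v : Fin n → V, Wset n v := by
      ext μ
      simp [SetPinf, Wset, Set.mem_iInter]
    rw [hEq]
    exact .iInter fun n => ((isOpen_iUnion fun v => isOpen_Wset n v).isGδ)
  · have hEq : SetB = ⋂ n : ℕ, Wset n (fun i : Fin n => eV i) := by
      ext μ
      simp [SetB, Wset, Set.mem_iInter]
    rw [hEq]
    exact .iInter fun n => (isOpen_Wset n _).isGδ
end
end

section
/- Let X be a separable infinite-dimensional real Banach space. Then the set {ν ∈ ℬ : X_ν is finitely representable in X} equals the closure, in the topological space ℬ, of the isometry class of X in ℬ. The same holds with ℬ replaced throughout by 𝒫_∞ or by 𝒫. -/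
open Filter Topology

noncomputable section

/-- The Banach space `X_μ` induced by `μ ∈ 𝒫` is finitely representable in `X`. -/
def FinRepInX (X : Type*) [NormedAddCommGroup X] [NormedSpace ℝ X] (μ : SpaceP) : Prop :=
  ∀ ε : ℝ, 0 < ε → ∀ (n : ℕ) (v : Fin n → V), ∃ x : Fin n → X,
    ∀ a : Fin n → ℚ,
      (1 + ε)⁻¹ * μ.1 (∑ i, a i • v i) ≤ ‖∑ i, (a i : ℝ) • x i‖ ∧
        ‖∑ i, (a i : ℝ) • x i‖ ≤ (1 + ε) * μ.1 (∑ i, a i • v i)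

/-! ### Auxiliary lemmas -/

namespace Stmt2Aux

/-- basic facts about `ℚ`-seminorms -/
lemma qsem_zero {μ : V → ℝ} (h : IsQSeminorm μ) : μ 0 = 0 := by
  have := h.1 0 0
  simpa using this

lemma qsem_neg {μ : V → ℝ} (h : IsQSeminorm μ) (v : V) : μ (-v) = μ v := by
  have := h.1 (-1) v
  simpa using this

lemma qsem_nonneg {μ : V → ℝ} (h : IsQSeminorm μ) (v : V) : 0 ≤ μ v := by
  have h2 := h.2 v (-v)
  rw [add_neg_cancel, qsem_zero h, qsem_neg h] at h2
  linarith

lemma qsem_abs_sub {μ : V → ℝ} (h : IsQSeminorm μ) (v w : V) :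
    |μ v - μ w| ≤ μ (v - w) := by
  rw [abs_sub_le_iff]
  constructor
  · have := h.2 w (v - w)
    simp only [add_sub_cancel] at this
    linarith
  · have := h.2 v (w - v)
    simp only [add_sub_cancel] at this
    have h3 : μ (w - v) = μ (v - w) := by
      rw [← qsem_neg h (v - w)]; congr 1; abel
    linarith

lemma qsem_sum_le {μ : V → ℝ} (h : IsQSeminorm μ) {ι : Type*} (s : Finset ι)
    (a : ι → ℚ) (v : ι → V) :
    μ (∑ i ∈ s, a i • v i) ≤ ∑ i ∈ s, |(a i : ℝ)| * μ (v i) := by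
  classical
  induction s using Finset.induction with
  | empty => simp [qsem_zero h]
  | insert j t hx ih =>
    rw [Finset.sum_insert hx, Finset.sum_insert hx]
    calc μ (a j • v j + ∑ i ∈ t, a i • v i)
        ≤ μ (a j • v j) + μ (∑ i ∈ t, a i • v i) := h.2 _ _
      _ ≤ |(a j : ℝ)| * μ (v j) + ∑ i ∈ t, |(a i : ℝ)| * μ (v i) := by
          rw [h.1]; exact add_le_add le_rfl ih

/-- additivity on finite sums for maps with the `RepIsometric` linearity properties -/
lemma Tmap_zero {X : Type*} [NormedAddCommGroup X] [NormedSpace ℝ X] {T : V → X}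
    (hsmul : ∀ (q : ℚ) (v : V), T (q • v) = (q : ℝ) • T v) : T 0 = 0 := by
  have := hsmul 0 0
  simpa using this

lemma Tmap_sum {X : Type*} [NormedAddCommGroup X] [NormedSpace ℝ X] {T : V → X}
    (hadd : ∀ v w : V, T (v + w) = T v + T w)
    (hsmul : ∀ (q : ℚ) (v : V), T (q • v) = (q : ℝ) • T v)
    {ι : Type*} (s : Finset ι) (a : ι → ℚ) (v : ι → V) :
    T (∑ i ∈ s, a i • v i) = ∑ i ∈ s, (a i : ℝ) • T (v i) := by
  classical
  induction s using Finset.induction with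
  | empty => simpa using Tmap_zero hsmul
  | insert j t hx ih =>
    rw [Finset.sum_insert hx, Finset.sum_insert hx, hadd, hsmul, ih]

/-- A vector with support in `range m` is the combination of the first `m` basis vectors. -/
lemma eq_sum_eV {v : V} {m : ℕ} (hv : ∀ i, m ≤ i → v i = 0) :
    ∑ i : Fin m, v i • eV i = v := by
  ext j
  rw [Finsupp.finset_sum_apply]
  by_cases hj : j < m
  · rw [Finset.sum_eq_single (⟨j, hj⟩ : Fin m)]
    · simp [eV, Finsupp.single_apply]
    · intro b _ hb
      simp only [Finsupp.smul_apply, eV, Finsupp.single_apply, smul_eq_mul]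
      rw [if_neg, mul_zero]
      intro hbj
      exact hb (by ext; simpa using hbj)
    · intro h; exact absurd (Finset.mem_univ _) h
  · rw [Finset.sum_eq_zero, hv j (le_of_not_gt hj)]
    intro b _
    simp only [Finsupp.smul_apply, eV, Finsupp.single_apply, smul_eq_mul]
    rw [if_neg, mul_zero]
    intro hbj
    omega

/-- neighborhoods in `SpaceP` contain finite-constraint sets -/
lemma exists_finset_of_mem_nhds {f : SpaceP} {t : Set SpaceP} (ht : t ∈ 𝓝 f) :
    ∃ I : Finset V, ∃ ε : ℝ, 0 < ε ∧
      ∀ g : SpaceP, (∀ v ∈ I, |g.1 v - f.1 v| < ε) → g ∈ t := by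
  rw [nhds_induced] at ht
  obtain ⟨u, hu, hut⟩ := Filter.mem_comap.1 ht
  rw [nhds_pi, Filter.mem_pi'] at hu
  obtain ⟨I, s, hs, hsu⟩ := hu
  choose δ hδ hball using fun v => Metric.mem_nhds_iff.1 (hs v)
  classical
  by_cases hI : I.Nonempty
  · refine ⟨I, I.inf' hI δ, ?_, ?_⟩
    · obtain ⟨v, hv, hvi⟩ := I.exists_mem_eq_inf' hI δ
      rw [hvi]; exact hδ v
    · intro g hg
      apply hut
      apply hsu
      intro v hv
      apply hball v
      have h1 : |g.1 v - f.1 v| < I.inf' hI δ := hg v hv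
      have h2 : I.inf' hI δ ≤ δ v := Finset.inf'_le _ hv
      simp only [Metric.mem_ball, Real.dist_eq]
      linarith
  · refine ⟨I, 1, one_pos, ?_⟩
    intro g _
    apply hut; apply hsu
    intro v hv
    exact absurd hv (by simp [Finset.not_nonempty_iff_eq_empty.1 hI])

/-- finite-constraint sets are neighborhoods in `SpaceP` -/
lemma constraint_mem_nhds (f : SpaceP) (I : Finset V) {ε : ℝ} (hε : 0 < ε) :
    {g : SpaceP | ∀ v ∈ I, |g.1 v - f.1 v| < ε} ∈ 𝓝 f := by
  have : {g : SpaceP | ∀ v ∈ I, |g.1 v - f.1 v| < ε} =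
      Subtype.val ⁻¹' (⋂ v ∈ I, {h : V → ℝ | |h v - f.1 v| < ε}) := by
    ext g; simp [Set.mem_iInter]
  rw [this]
  apply ContinuousAt.preimage_mem_nhds continuous_subtype_val.continuousAt
  apply IsOpen.mem_nhds
  · apply isOpen_biInter_finset
    intro v _
    have : Continuous fun h : V → ℝ => |h v - f.1 v| :=
      ((continuous_apply v).sub continuous_const).abs
    exact isOpen_lt this continuous_const
  · simp [hε]

/-- one step of the independent-sequence construction -/
lemma exists_step {X : Type*} [NormedAddCommGroup X] [NormedSpace ℝ X]
    (hinf : ¬FiniteDimensional ℝ X) (t : X) {η : ℝ} (hη : 0 < η) (l : List X) :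
    ∃ z : X, ‖z - t‖ < η ∧ z ∉ Submodule.span ℝ {y | y ∈ l} := by
  by_contra h
  push_neg at h
  have hball : Metric.ball t η ⊆ (Submodule.span ℝ {y | y ∈ l} : Set X) := by
    intro z hz
    exact h z (by simpa [Real.dist_eq, dist_eq_norm] using hz)
  have htop : Submodule.span ℝ {y | y ∈ l} = ⊤ := by
    apply Submodule.eq_top_of_nonempty_interior'
    exact ⟨t, mem_interior.2 ⟨Metric.ball t η, hball, Metric.isOpen_ball,
      Metric.mem_ball_self hη⟩⟩
  apply hinf
  have hfin : FiniteDimensional ℝ (Submodule.span ℝ {y | y ∈ l}) :=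
    FiniteDimensional.span_of_finite ℝ l.finite_toSet
  rw [htop] at hfin
  exact (Submodule.topEquiv.finiteDimensional)

/-- an independent sequence tracking prescribed targets -/
lemma exists_seq {X : Type*} [NormedAddCommGroup X] [NormedSpace ℝ X]
    (hinf : ¬FiniteDimensional ℝ X) (t : ℕ → X) (η : ℕ → ℝ) (hη : ∀ n, 0 < η n) :
    ∃ z : ℕ → X, (∀ n, ‖z n - t n‖ < η n) ∧
      ∀ n, z n ∉ Submodule.span ℝ (z '' Set.Iio n) := by
  classical
  let pick : ℕ → List X → X := fun n l => (exists_step hinf (t n) (hη n) l).choose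
  let state : ℕ → List X := fun n => Nat.rec [] (fun k l => l ++ [pick k l]) n
  have hstate : ∀ n, state (n + 1) = state n ++ [pick n (state n)] := fun n => rfl
  let z : ℕ → X := fun n => pick n (state n)
  have hlist : ∀ n, state n = (List.range n).map z := by
    intro n
    induction n with
    | zero => rfl
    | succ k ih =>
      rw [hstate, List.range_succ, List.map_append, ← ih]
      rfl
  have hset : ∀ n, {y | y ∈ state n} = z '' Set.Iio n := by
    intro n
    ext y
    simp [hlist n, Set.mem_image, eq_comm]
  refine ⟨z, ?_, ?_⟩
  · intro n
    exact (exists_step hinf (t n) (hη n) (state n)).choose_spec.1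
  · intro n
    have h1 : z n ∉ Submodule.span ℝ {y | y ∈ state n} :=
      (exists_step hinf (t n) (hη n) (state n)).choose_spec.2
    have heq : Submodule.span ℝ {y | y ∈ state n} = Submodule.span ℝ (z '' Set.Iio n) := by
      rw [hset n]
    rwa [heq] at h1

/-- The construction: a pseudonorm in `ℬ` representing `X` isometrically, close to `ν`
at finitely many prescribed vectors. -/
lemma approx_rep {X : Type*} [NormedAddCommGroup X] [NormedSpace ℝ X]
    [TopologicalSpace.SeparableSpace X]
    (hinf : ¬FiniteDimensional ℝ X) (ν : SpaceP) (hν : FinRepInX X ν)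
    (I : Finset V) {ε : ℝ} (hε : 0 < ε) :
    ∃ μ : SpaceP, RepIsometric X μ ∧ μ ∈ SetB ∧ ∀ v ∈ I, |μ.1 v - ν.1 v| < ε := by
  classical
  have hν_nonneg := qsem_nonneg ν.2
  -- `m` bounds the supports of all constraint vectors
  set m : ℕ := (I.sup fun v => v.support.sup id) + 1 with hm
  have hsupp : ∀ v ∈ I, ∀ i, m ≤ i → v i = 0 := by
    intro v hv i hi
    by_contra h
    have h0 : i ∈ v.support := Finsupp.mem_support_iff.2 h
    have h1 : i ≤ v.support.sup id := Finset.le_sup (f := id) h0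
    have h2 : v.support.sup id ≤ I.sup fun v => v.support.sup id :=
      Finset.le_sup (f := fun v => v.support.sup id) hv
    omega
  -- constants
  set Rν : ℝ := 1 + ∑ v ∈ I, ν.1 v with hRν
  have hRνpos : 0 < Rν := by
    have : 0 ≤ ∑ v ∈ I, ν.1 v := Finset.sum_nonneg fun v _ => hν_nonneg v
    simp only [hRν]; linarith
  have hRν1 : ∀ v ∈ I, ν.1 v ≤ Rν := by
    intro v hv
    have h1 : ν.1 v ≤ ∑ w ∈ I, ν.1 w := Finset.single_le_sum (fun w _ => hν_nonneg w) hv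
    simp only [hRν]; linarith
  set δ : ℝ := ε / (4 * Rν) with hδ
  have hδpos : 0 < δ := by positivity
  -- witnesses for finite representability on the first `m` basis vectors
  obtain ⟨x, hx⟩ := hν δ hδpos m (fun i => eV i)
  -- total coefficient mass of the constraint vectors
  set S : ℝ := ∑ v ∈ I, ∑ i ∈ Finset.range m, |(v i : ℝ)| with hS
  have hSnn : 0 ≤ S := Finset.sum_nonneg fun v _ =>
    Finset.sum_nonneg fun i _ => abs_nonneg _
  set η₀ : ℝ := ε / (4 * (1 + S)) with hη₀def
  have hη₀ : 0 < η₀ := by positivity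
  -- a dense sequence in X
  have hne : Nonempty X := ⟨0⟩
  obtain ⟨d, hd⟩ := TopologicalSpace.exists_dense_seq X
  -- targets and tolerances
  set tseq : ℕ → X := fun k => if h : k < m then x ⟨k, h⟩ else d (Nat.unpair (k - m)).1
    with htseq
  set η : ℕ → ℝ := fun k => if k < m then η₀ else (2 : ℝ)⁻¹ ^ (Nat.unpair (k - m)).2 with hηdef
  have hηpos : ∀ k, 0 < η k := by
    intro k
    by_cases h : k < m <;> simp only [hηdef, h, if_true, if_false] <;> positivity
  obtain ⟨z, hzclose, hzspan⟩ := exists_seq hinf tseq η hηpos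
  -- the representing map and pseudonorm
  set T : V → X := fun v => v.sum fun i q => (q : ℝ) • z i with hT
  have Tadd : ∀ v w : V, T (v + w) = T v + T w := by
    intro v w
    apply Finsupp.sum_add_index'
    · intro a; simp
    · intro a b₁ b₂; push_cast; rw [add_smul]
  have Tsmul : ∀ (q : ℚ) (v : V), T (q • v) = (q : ℝ) • T v := by
    intro q v
    show ((q • v).sum fun i c => (c : ℝ) • z i) = (q : ℝ) • v.sum fun i c => (c : ℝ) • z i
    rw [Finsupp.sum_smul_index' (fun i => by simp), Finsupp.smul_sum]
    apply Finsupp.sum_congr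
    intro i _
    show ((q * v i : ℚ) : ℝ) • z i = (q : ℝ) • ((v i : ℚ) : ℝ) • z i
    push_cast
    rw [mul_smul]
  have Tzero : T 0 = 0 := Tmap_zero Tsmul
  set μf : V → ℝ := fun v => ‖T v‖ with hμf
  have hμsem : IsQSeminorm μf := by
    constructor
    · intro q v; simp only [hμf, Tsmul, norm_smul, Real.norm_eq_abs]
    · intro v w; simp only [hμf, Tadd]; exact norm_add_le _ _
  set μ : SpaceP := ⟨μf, hμsem⟩ with hμ
  have TeV : ∀ i, T (eV i) = z i := by
    intro i
    show (Finsupp.single i (1:ℚ)).sum (fun i q => (q : ℝ) • z i) = z i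
    rw [Finsupp.sum_single_index (by simp)]
    simp
  have Tsum : ∀ (n' : ℕ) (a : Fin n' → ℚ) (w : Fin n' → V),
      T (∑ i, a i • w i) = ∑ i, (a i : ℝ) • T (w i) :=
    fun n' a w => Tmap_sum Tadd Tsmul Finset.univ a w
  -- distances to the finite-representability witnesses
  have hz_x : ∀ i : Fin m, ‖z i - x i‖ < η₀ := by
    intro i
    have h1 := hzclose (i : ℕ)
    have h2 : ((i : ℕ) < m) := i.isLt
    simp only [htseq, hηdef, h2, dif_pos, if_pos, Fin.eta] at h1
    exact h1
  -- RepIsometric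
  have hrep : RepIsometric X μ := by
    refine ⟨T, Tadd, Tsmul, fun v => rfl, ?_⟩
    rw [Metric.dense_iff]
    intro y r hr
    obtain ⟨j, hj⟩ := Metric.denseRange_iff.1 hd y (r / 2) (by linarith)
    obtain ⟨l, hl⟩ := exists_pow_lt_of_lt_one (x := r / 2) (y := (2:ℝ)⁻¹)
      (by linarith) (by norm_num)
    set k := m + Nat.pair j l with hk
    have hkm : ¬ k < m := by omega
    have h1 := hzclose k
    have h2 : tseq k = d j := by
      simp only [htseq, hkm, dif_neg, hk]
      congr 1
      simp [Nat.unpair_pair]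
    have h3 : η k = (2:ℝ)⁻¹ ^ l := by
      simp only [hηdef, hkm, if_false, hk]
      congr 1
      simp [Nat.unpair_pair]
    rw [h2, h3] at h1
    refine ⟨z k, ?_, ?_⟩
    · rw [Metric.mem_ball, dist_comm]
      calc dist y (z k) ≤ dist y (d j) + dist (d j) (z k) := dist_triangle _ _ _
        _ < r / 2 + r / 2 := by
            apply add_lt_add hj
            rw [dist_comm, dist_eq_norm]
            exact h1.trans hl
        _ = r := by ring
    · exact Submodule.subset_span ⟨eV k, TeV k⟩
  -- μ ∈ SetB
  have hB : μ ∈ SetB := by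
    intro n
    rcases Nat.eq_zero_or_pos n with hn | hn
    · subst hn
      refine ⟨1, one_pos, ?_⟩
      intro a
      simp [hμ, hμf, Tzero]
    · set f : (Fin n → ℝ) → ℝ := fun a => ‖∑ i, a i • z (i : ℕ)‖ with hf
      have hfc : Continuous f :=
        (continuous_finset_sum _ fun i _ => (continuous_apply i).smul continuous_const).norm
      set Sp : Set (Fin n → ℝ) := {a | ∑ i, |a i| = 1} with hSp
      have hSpc : IsCompact Sp := by
        apply Metric.isCompact_of_isClosed_isBounded
        · exact isClosed_eq (continuous_finset_sum _ fun i _ => (continuous_apply i).abs)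
            continuous_const
        · apply Bornology.IsBounded.subset (Metric.isBounded_closedBall (x := 0) (r := 1))
          intro a ha
          simp only [Metric.mem_closedBall, dist_zero_right]
          rw [pi_norm_le_iff_of_nonneg zero_le_one]
          intro i
          have h1 : |a i| ≤ ∑ j, |a j| :=
            Finset.single_le_sum (f := fun j => |a j|) (fun j _ => abs_nonneg _)
              (Finset.mem_univ i)
          rw [ha] at h1
          simpa using h1
      have hSpne : Sp.Nonempty := by
        refine ⟨Pi.single ⟨0, hn⟩ 1, ?_⟩
        simp only [hSp, Set.mem_setOf_eq]
        rw [Finset.sum_eq_single (⟨0, hn⟩ : Fin n)]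
        · simp
        · intro b _ hb; simp [Pi.single_apply, hb]
        · intro h; exact absurd (Finset.mem_univ _) h
      obtain ⟨a₀, ha₀S, ha₀min⟩ := hSpc.exists_isMinOn hSpne hfc.continuousOn
      have hc : 0 < f a₀ := by
        rcases (norm_nonneg (∑ i, a₀ i • z (i : ℕ))).lt_or_eq with h | h
        · exact h
        · exfalso
          have hzero : ∑ i, a₀ i • z (i : ℕ) = 0 := by
            rw [← norm_eq_zero]; exact h.symm
          have hex : ∃ i, a₀ i ≠ 0 := by
            by_contra hcon
            push_neg at hcon
            have : (∑ i, |a₀ i|) = 0 := by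
              apply Finset.sum_eq_zero; intro i _; simp [hcon i]
            rw [ha₀S] at this
            norm_num at this
          set tt : Finset (Fin n) := Finset.univ.filter (fun i => a₀ i ≠ 0) with htt
          have httne : tt.Nonempty := by
            obtain ⟨i, hi⟩ := hex
            exact ⟨i, by simp [htt, hi]⟩
          set i₀ := tt.max' httne with hi₀def
          have hi₀ : a₀ i₀ ≠ 0 := by
            have := tt.max'_mem httne
            simp only [htt, Finset.mem_filter] at this
            exact this.2
          apply hzspan (i₀ : ℕ)
          have hsplit : a₀ i₀ • z (i₀ : ℕ) + ∑ i ∈ Finset.univ.erase i₀, a₀ i • z (i : ℕ)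
              = 0 := by
            calc a₀ i₀ • z (i₀ : ℕ) + ∑ i ∈ Finset.univ.erase i₀, a₀ i • z (i : ℕ)
                = ∑ i, a₀ i • z (i : ℕ) :=
                  Finset.add_sum_erase _ (fun i => a₀ i • z (i : ℕ)) (Finset.mem_univ i₀)
              _ = 0 := hzero
          have hrest : ∑ i ∈ Finset.univ.erase i₀, a₀ i • z (i : ℕ) ∈
              Submodule.span ℝ (z '' Set.Iio (i₀ : ℕ)) := by
            apply Submodule.sum_mem
            intro i hi
            rcases eq_or_ne (a₀ i) 0 with hai | hai
            · simp [hai]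
            · have hit : i ∈ tt := by simp [htt, hai]
              have hle : i ≤ i₀ := tt.le_max' i hit
              have hneq : i ≠ i₀ := (Finset.mem_erase.1 hi).1
              have hlt : (i : ℕ) < (i₀ : ℕ) := by
                have := lt_of_le_of_ne hle hneq
                exact this
              exact Submodule.smul_mem _ _
                (Submodule.subset_span ⟨(i : ℕ), hlt, rfl⟩)
          have : z (i₀ : ℕ) = (a₀ i₀)⁻¹ • (- ∑ i ∈ Finset.univ.erase i₀, a₀ i • z (i : ℕ)) := by
            rw [eq_inv_smul_iff₀ hi₀, eq_neg_iff_add_eq_zero]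
            exact hsplit
          rw [this]
          exact Submodule.smul_mem _ _ (Submodule.neg_mem _ hrest)
      refine ⟨f a₀, hc, ?_⟩
      intro a
      have hμval : μ.1 (∑ i, a i • eV (i : ℕ)) = ‖∑ i, ((a i : ℚ) : ℝ) • z (i : ℕ)‖ := by
        show ‖T _‖ = _
        rw [Tsum n a (fun i : Fin n => eV (i : ℕ))]
        congr 1
        apply Finset.sum_congr rfl
        intro i _
        rw [TeV]
      rcases eq_or_ne a 0 with ha | ha
      · subst ha
        simp only [Pi.zero_apply, Rat.cast_zero, abs_zero, Finset.sum_const_zero, mul_zero]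
        exact qsem_nonneg hμsem _
      · set sq : ℚ := ∑ i, |a i| with hsq
        have hsqpos : 0 < sq := by
          obtain ⟨i, hi⟩ : ∃ i, a i ≠ 0 := by
            by_contra hcon; push_neg at hcon; exact ha (funext hcon)
          apply Finset.sum_pos' (fun j _ => abs_nonneg _)
          exact ⟨i, Finset.mem_univ i, abs_pos.2 hi⟩
        have hcast : ∑ i, |((a i : ℚ) : ℝ)| = (sq : ℝ) := by
          rw [hsq]; push_cast; rfl
        have hb : (fun i => ((sq⁻¹ * a i : ℚ) : ℝ)) ∈ Sp := by
          simp only [hSp, Set.mem_setOf_eq]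
          push_cast
          have : ∀ i : Fin n, |(sq : ℝ)⁻¹ * (a i : ℝ)| = (sq : ℝ)⁻¹ * |(a i : ℝ)| := by
            intro i
            rw [abs_mul, abs_of_pos (by positivity : (0:ℝ) < (sq : ℝ)⁻¹)]
          simp only [this]
          rw [← Finset.mul_sum, hcast]
          field_simp
        have hmin := ha₀min hb
        have hfb : f (fun i => ((sq⁻¹ * a i : ℚ) : ℝ))
            = (sq : ℝ)⁻¹ * ‖∑ i, ((a i : ℚ) : ℝ) • z (i : ℕ)‖ := by
          simp only [hf]
          rw [← norm_smul_of_nonneg (by positivity : (0:ℝ) ≤ (sq : ℝ)⁻¹)]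
          congr 1
          rw [Finset.smul_sum]
          apply Finset.sum_congr rfl
          intro i _
          push_cast
          rw [mul_smul]
        rw [hμval, hcast]
        have h5 : f a₀ ≤ (sq : ℝ)⁻¹ * ‖∑ i, ((a i : ℚ) : ℝ) • z (i : ℕ)‖ := by
          rw [← hfb]; exact hmin
        have hsqR : (0:ℝ) < (sq : ℝ) := by exact_mod_cast hsqpos
        calc f a₀ * (sq : ℝ) ≤ ((sq : ℝ)⁻¹ * ‖∑ i, ((a i : ℚ) : ℝ) • z (i : ℕ)‖) * (sq : ℝ) :=
              mul_le_mul_of_nonneg_right h5 hsqR.le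
          _ = ‖∑ i, ((a i : ℚ) : ℝ) • z (i : ℕ)‖ := by field_simp
  -- closeness at constraint vectors
  refine ⟨μ, hrep, hB, ?_⟩
  intro v hv
  have hveq : ∑ i : Fin m, v (i : ℕ) • eV (i : ℕ) = v := eq_sum_eV (hsupp v hv)
  have hTv : T v = ∑ i : Fin m, ((v (i : ℕ) : ℚ) : ℝ) • z (i : ℕ) := by
    conv_lhs => rw [← hveq]
    rw [Tsum m _ (fun i : Fin m => eV (i : ℕ))]
    apply Finset.sum_congr rfl
    intro i _
    rw [TeV]
  have h2 := hx (fun i : Fin m => v (i : ℕ))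
  rw [hveq] at h2
  obtain ⟨h2l, h2r⟩ := h2
  set y := ∑ i : Fin m, ((v (i : ℕ) : ℚ) : ℝ) • x i with hy
  have h1 : ‖T v - y‖ ≤ S * η₀ := by
    rw [hTv, hy, ← Finset.sum_sub_distrib]
    calc ‖∑ i : Fin m, (((v (i : ℕ) : ℚ) : ℝ) • z (i : ℕ) - ((v (i : ℕ) : ℚ) : ℝ) • x i)‖
        ≤ ∑ i : Fin m, ‖((v (i : ℕ) : ℚ) : ℝ) • z (i : ℕ) - ((v (i : ℕ) : ℚ) : ℝ) • x i‖ :=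
          norm_sum_le _ _
      _ ≤ ∑ i : Fin m, |((v (i : ℕ) : ℚ) : ℝ)| * η₀ := by
          apply Finset.sum_le_sum
          intro i _
          rw [← smul_sub, norm_smul, Real.norm_eq_abs]
          exact mul_le_mul_of_nonneg_left (hz_x i).le (abs_nonneg _)
      _ = (∑ i ∈ Finset.range m, |((v i : ℚ) : ℝ)|) * η₀ := by
          rw [Finset.sum_mul, Fin.sum_univ_eq_sum_range (fun i => |((v i : ℚ) : ℝ)| * η₀)]
      _ ≤ S * η₀ := by
          apply mul_le_mul_of_nonneg_right _ hη₀.le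
          rw [hS]
          exact Finset.single_le_sum
            (f := fun w => ∑ i ∈ Finset.range m, |((w i : ℚ) : ℝ)|)
            (fun w _ => Finset.sum_nonneg fun i _ => abs_nonneg _) hv
  have hSη : S * η₀ ≤ ε / 4 := by
    have h9 : S * η₀ = ε * (S / (4 * (1 + S))) := by rw [hη₀def]; ring
    have h10 : S / (4 * (1 + S)) ≤ 1 / 4 := by
      rw [div_le_div_iff₀ (by positivity) (by norm_num : (0:ℝ) < 4)]
      linarith
    calc S * η₀ = ε * (S / (4 * (1 + S))) := h9
      _ ≤ ε * (1 / 4) := mul_le_mul_of_nonneg_left h10 hε.le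
      _ = ε / 4 := by ring
  have h3 : |‖y‖ - ν.1 v| ≤ δ * ν.1 v := by
    have h7 : (1 + δ) * ν.1 v = ν.1 v + δ * ν.1 v := by ring
    rw [abs_sub_le_iff]
    constructor
    · linarith
    · have hd1 : (0:ℝ) < 1 + δ := by linarith
      have hw := hν_nonneg v
      have h6 : ν.1 v - δ * ν.1 v ≤ (1 + δ)⁻¹ * ν.1 v := by
        rw [inv_mul_eq_div, le_div_iff₀ hd1]
        have h8 : (ν.1 v - δ * ν.1 v) * (1 + δ) = ν.1 v - δ ^ 2 * ν.1 v := by ring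
        have h8' : 0 ≤ δ ^ 2 * ν.1 v := by positivity
        linarith
      linarith
  have hδR : δ * ν.1 v ≤ ε / 4 := by
    have h4 : δ * ν.1 v ≤ δ * Rν := mul_le_mul_of_nonneg_left (hRν1 v hv) hδpos.le
    have h5 : δ * Rν = ε / 4 := by
      rw [hδ]; field_simp
    exact h4.trans h5.le
  have habs : |μ.1 v - ν.1 v| ≤ |‖T v‖ - ‖y‖| + |‖y‖ - ν.1 v| := by
    have : μ.1 v - ν.1 v = (‖T v‖ - ‖y‖) + (‖y‖ - ν.1 v) := by
      show μf v - ν.1 v = _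
      simp only [hμf]
      ring
    rw [this]
    exact abs_add_le _ _
  have hnorm : |‖T v‖ - ‖y‖| ≤ ‖T v - y‖ := abs_norm_sub_norm_le _ _
  calc |μ.1 v - ν.1 v| ≤ |‖T v‖ - ‖y‖| + |‖y‖ - ν.1 v| := habs
    _ ≤ S * η₀ + δ * ν.1 v := add_le_add (hnorm.trans h1) h3
    _ ≤ ε / 4 + ε / 4 := add_le_add hSη hδR
    _ < ε := by linarith

/-- Extension of the coefficient seminorm of `ν` at `v₁, …, vₙ` to a real seminorm. -/
lemma exists_ext (ν : SpaceP) (n : ℕ) (v : Fin n → V) :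
    ∃ g : (Fin n → ℝ) → ℝ, Continuous g ∧
      (∀ b : Fin n → ℚ, g (fun i => (b i : ℝ)) = ν.1 (∑ i, b i • v i)) ∧
      (∀ a a' : Fin n → ℝ, g (a + a') ≤ g a + g a') ∧
      (∀ (t : ℝ) (a : Fin n → ℝ), g (t • a) = |t| * g a) ∧
      (∀ a : Fin n → ℝ, g a ≤ ∑ i, |a i| * ν.1 (v i)) := by
  classical
  set w : (Fin n → ℚ) → V := fun b => ∑ i, b i • v i with hw
  set cst : (Fin n → ℚ) → (Fin n → ℝ) := fun b i => (b i : ℝ) with hcst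
  have hcst_inj : Function.Injective cst := by
    intro b b' h
    funext i
    have : ((b i : ℚ) : ℝ) = ((b' i : ℚ) : ℝ) := congrFun h i
    exact_mod_cast this
  set s : Set (Fin n → ℝ) := Set.range cst with hs
  have hdense : Dense s := by
    rw [Metric.dense_iff]
    intro a r hr
    have : ∀ i : Fin n, ∃ q : ℚ, |a i - (q : ℝ)| < r := fun i => exists_rat_near (a i) hr
    choose b hb using this
    refine ⟨cst b, ?_, ⟨b, rfl⟩⟩
    rw [Metric.mem_ball, dist_comm, dist_pi_lt_iff hr]
    intro i
    rw [Real.dist_eq]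
    exact hb i
  set L : ℝ := ∑ i, ν.1 (v i) with hL
  have hLnn : 0 ≤ L := Finset.sum_nonneg fun i _ => qsem_nonneg ν.2 _
  set f : (Fin n → ℝ) → ℝ := fun a => if h : a ∈ s then ν.1 (w h.choose) else 0 with hf
  have hfval : ∀ b : Fin n → ℚ, f (cst b) = ν.1 (w b) := by
    intro b
    have h : cst b ∈ s := ⟨b, rfl⟩
    have hch : h.choose = b := hcst_inj h.choose_spec
    simp only [hf, dif_pos h, hch]
  have hwsub : ∀ b b' : Fin n → ℚ, w b - w b' = w (b - b') := by
    intro b b'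
    simp only [hw, ← Finset.sum_sub_distrib, ← sub_smul, Pi.sub_apply]
  have hlip : LipschitzOnWith (Real.toNNReal L) f s := by
    apply LipschitzOnWith.of_dist_le_mul
    rintro a ⟨b, rfl⟩ a' ⟨b', rfl⟩
    rw [Real.dist_eq, hfval, hfval]
    calc |ν.1 (w b) - ν.1 (w b')| ≤ ν.1 (w b - w b') := qsem_abs_sub ν.2 _ _
      _ = ν.1 (∑ i, (b - b') i • v i) := by rw [hwsub]
      _ ≤ ∑ i, |(((b - b') i : ℚ) : ℝ)| * ν.1 (v i) := qsem_sum_le ν.2 _ _ _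
      _ ≤ ∑ i, dist (cst b) (cst b') * ν.1 (v i) := by
          apply Finset.sum_le_sum
          intro i _
          apply mul_le_mul_of_nonneg_right _ (qsem_nonneg ν.2 _)
          have h1 : dist (cst b i) (cst b' i) ≤ dist (cst b) (cst b') :=
            dist_le_pi_dist (cst b) (cst b') i
          rw [Real.dist_eq] at h1
          calc |(((b - b') i : ℚ) : ℝ)| = |cst b i - cst b' i| := by
                simp only [hcst, Pi.sub_apply]; push_cast; ring_nf
            _ ≤ dist (cst b) (cst b') := h1
      _ = Real.toNNReal L * dist (cst b) (cst b') := by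
          rw [← Finset.mul_sum, ← hL, Real.coe_toNNReal _ hLnn, mul_comm]
  obtain ⟨g, hglip, hgeq⟩ := hlip.extend_real
  have hgval : ∀ b : Fin n → ℚ, g (cst b) = ν.1 (w b) := by
    intro b
    rw [← hgeq ⟨b, rfl⟩, hfval]
  have hgcont : Continuous g := hglip.continuous
  refine ⟨g, hgcont, fun b => hgval b, ?_, ?_, ?_⟩
  · -- subadditivity
    have hclosed : IsClosed {p : (Fin n → ℝ) × (Fin n → ℝ) | g (p.1 + p.2) ≤ g p.1 + g p.2} :=
      isClosed_le (hgcont.comp (continuous_fst.add continuous_snd))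
        ((hgcont.comp continuous_fst).add (hgcont.comp continuous_snd))
    have hsub : (s ×ˢ s : Set _) ⊆ {p | g (p.1 + p.2) ≤ g p.1 + g p.2} := by
      rintro ⟨a, a'⟩ ⟨⟨b, rfl⟩, ⟨b', rfl⟩⟩
      have hadd : cst b + cst b' = cst (b + b') := by
        funext i; simp [hcst]
      simp only [Set.mem_setOf_eq, hadd, hgval]
      calc ν.1 (w (b + b')) = ν.1 (w b + w b') := by
            congr 1
            simp only [hw, ← Finset.sum_add_distrib, ← add_smul, Pi.add_apply]
        _ ≤ ν.1 (w b) + ν.1 (w b') := ν.2.2 _ _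
    intro a a'
    have : (a, a') ∈ {p : (Fin n → ℝ) × (Fin n → ℝ) | g (p.1 + p.2) ≤ g p.1 + g p.2} := by
      have hd : Dense (s ×ˢ s : Set _) := hdense.prod hdense
      have := hclosed.closure_subset_iff.2 hsub
      exact this (hd.closure_eq ▸ Set.mem_univ _ : (a, a') ∈ closure (s ×ˢ s))
    exact this
  · -- homogeneity
    have hclosed : IsClosed {p : ℝ × (Fin n → ℝ) | g (p.1 • p.2) = |p.1| * g p.2} :=
      isClosed_eq (hgcont.comp (continuous_fst.smul continuous_snd))
        ((continuous_fst.abs).mul (hgcont.comp continuous_snd))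
    have hsub : ((Set.range (fun q : ℚ => (q : ℝ))) ×ˢ s : Set _) ⊆
        {p | g (p.1 • p.2) = |p.1| * g p.2} := by
      rintro ⟨t, a⟩ ⟨⟨q, rfl⟩, ⟨b, rfl⟩⟩
      have hsm : (q : ℝ) • cst b = cst (q • b) := by
        funext i; simp [hcst]
      simp only [Set.mem_setOf_eq, hsm, hgval]
      have hqw : w (q • b) = q • w b := by
        simp only [hw, Finset.smul_sum]
        apply Finset.sum_congr rfl
        intro i _
        rw [Pi.smul_apply, smul_assoc]
      rw [hqw, ν.2.1]
    intro t a
    have hd : Dense ((Set.range (fun q : ℚ => (q : ℝ))) ×ˢ s : Set _) :=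
      (Rat.denseRange_cast).prod hdense
    have := hclosed.closure_subset_iff.2 hsub
    exact this (hd.closure_eq ▸ Set.mem_univ _ : (t, a) ∈ closure _)
  · -- upper bound
    have hclosed : IsClosed {a : Fin n → ℝ | g a ≤ ∑ i, |a i| * ν.1 (v i)} :=
      isClosed_le hgcont
        (continuous_finset_sum _ fun i _ => ((continuous_apply i).abs).mul continuous_const)
    have hsub : s ⊆ {a | g a ≤ ∑ i, |a i| * ν.1 (v i)} := by
      rintro a ⟨b, rfl⟩
      simp only [Set.mem_setOf_eq, hgval]
      calc ν.1 (w b) ≤ ∑ i, |((b i : ℚ) : ℝ)| * ν.1 (v i) := qsem_sum_le ν.2 _ _ _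
        _ = ∑ i, |cst b i| * ν.1 (v i) := rfl
    intro a
    have := hclosed.closure_subset_iff.2 hsub
    exact this (hdense.closure_eq ▸ Set.mem_univ _ : a ∈ closure s)

/-- The closed-direction: every pseudonorm in the closure of the isometry class is
finitely representable in `X`. -/
lemma finrep_of_closure {X : Type*} [NormedAddCommGroup X] [NormedSpace ℝ X]
    (ν : SpaceP) (hν : ν ∈ closure {μ : SpaceP | RepIsometric X μ}) :
    FinRepInX X ν := by
  classical
  intro ε hε n v
  obtain ⟨g, hgc, hgval, hgsub, hghom, hgbd⟩ := exists_ext ν n v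
  set cst : (Fin n → ℚ) → (Fin n → ℝ) := fun b i => (b i : ℝ) with hcst
  set wv : (Fin n → ℚ) → V := fun b => ∑ i, b i • v i with hwv
  have hgval' : ∀ b : Fin n → ℚ, g (cst b) = ν.1 (wv b) := fun b => hgval b
  -- basic properties of g
  have hg0 : g 0 = 0 := by
    have := hghom 0 0
    simpa using this
  have hgneg : ∀ a, g (-a) = g a := by
    intro a
    have := hghom (-1) a
    simpa using this
  have hgnn : ∀ a, 0 ≤ g a := by
    intro a
    have h1 := hgsub a (-a)
    rw [add_neg_cancel, hg0, hgneg] at h1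
    linarith
  have hgdiff : ∀ a a', |g a - g a'| ≤ g (a - a') := by
    intro a a'
    rw [abs_sub_le_iff]
    constructor
    · have := hgsub a' (a - a')
      rw [add_sub_cancel] at this
      linarith
    · have := hgsub a (a' - a)
      rw [add_sub_cancel] at this
      have h2 : g (a' - a) = g (a - a') := by
        rw [← hgneg (a - a')]; congr 1; abel
      linarith
  set L : ℝ := ∑ i, ν.1 (v i) with hL
  have hLnn : 0 ≤ L := Finset.sum_nonneg fun i _ => qsem_nonneg ν.2 _
  have hgnorm : ∀ a, g a ≤ L * ‖a‖ := by
    intro a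
    calc g a ≤ ∑ i, |a i| * ν.1 (v i) := hgbd a
      _ ≤ ∑ i, ‖a‖ * ν.1 (v i) := by
          apply Finset.sum_le_sum
          intro i _
          apply mul_le_mul_of_nonneg_right _ (qsem_nonneg ν.2 _)
          have := norm_le_pi_norm a i
          rwa [Real.norm_eq_abs] at this
      _ = L * ‖a‖ := by rw [← Finset.mul_sum, ← hL, mul_comm]
  -- null space and complement
  set N : Submodule ℝ (Fin n → ℝ) :=
    { carrier := {a | g a = 0}
      add_mem' := by
        intro a b ha hb
        simp only [Set.mem_setOf_eq] at *
        have h1 := hgsub a b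
        have h2 := hgnn (a + b)
        rw [ha, hb] at h1
        linarith
      zero_mem' := hg0
      smul_mem' := by
        intro c a ha
        simp only [Set.mem_setOf_eq] at *
        rw [hghom, ha, mul_zero] } with hN
  have hNmem : ∀ a, a ∈ N ↔ g a = 0 := fun a => Iff.rfl
  obtain ⟨C, hC⟩ := Submodule.exists_isCompl N
  set P : (Fin n → ℝ) →ₗ[ℝ] (Fin n → ℝ) :=
    C.subtype.comp (C.linearProjOfIsCompl N hC.symm) with hP
  have hPmem : ∀ a, P a ∈ C := fun a => (C.linearProjOfIsCompl N hC.symm a).2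
  have hPN : ∀ a, a - P a ∈ N := by
    intro a
    have h1 := Submodule.projection_add_projection_eq_self hC.symm a
    have h2 : a - P a = (N.linearProjOfIsCompl C hC.symm.symm a : Fin n → ℝ) := by
      have h3 : P a = (C.linearProjOfIsCompl N hC.symm a : Fin n → ℝ) := rfl
      rw [h3, sub_eq_iff_eq_add, add_comm]
      exact h1.symm
    rw [h2]
    exact (N.linearProjOfIsCompl C hC.symm.symm a).2
  have hgP : ∀ a, g (P a) = g a := by
    intro a
    have h1 : g (a - P a) = 0 := hPN a
    have h2 := hgdiff (P a) a
    have h3 : g (P a - a) = g (a - P a) := by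
      rw [← hgneg (a - P a)]; congr 1; abel
    rw [h3, h1] at h2
    have h4 : |g (P a) - g a| = 0 := le_antisymm h2 (abs_nonneg _)
    have := abs_eq_zero.1 h4
    linarith
  by_cases hCbot : C = ⊥
  · -- degenerate case: g vanishes identically
    have hNtop : N = ⊤ := by
      have hcd := hC.codisjoint
      rw [codisjoint_iff] at hcd
      rw [hCbot, sup_bot_eq] at hcd
      exact hcd
    have hgall : ∀ a, g a = 0 := by
      intro a
      have : a ∈ N := hNtop ▸ Submodule.mem_top
      exact this
    refine ⟨fun _ => (0 : X), ?_⟩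
    intro a
    have hz : ∑ i, (a i : ℝ) • (0 : X) = 0 := by simp
    have hval : ν.1 (∑ i, a i • v i) = 0 := by
      rw [← hgval a]; exact hgall _
    rw [hz, hval, norm_zero]
    constructor <;> simp
  · -- main case
    have hCclosed : IsClosed (C : Set (Fin n → ℝ)) := Submodule.closed_of_finiteDimensional C
    set SC : Set (Fin n → ℝ) := (C : Set (Fin n → ℝ)) ∩ Metric.sphere 0 1 with hSC
    have hSCcomp : IsCompact SC := (isCompact_sphere 0 1).inter_left hCclosed
    have hSCne : SC.Nonempty := by
      obtain ⟨a, haC, ha0⟩ := (Submodule.ne_bot_iff C).1 hCbot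
      refine ⟨‖a‖⁻¹ • a, Submodule.smul_mem _ _ haC, ?_⟩
      rw [mem_sphere_zero_iff_norm]
      exact norm_smul_inv_norm ha0
    obtain ⟨a₀, ha₀, hmin⟩ := hSCcomp.exists_isMinOn hSCne hgc.continuousOn
    set c : ℝ := g a₀ with hc_def
    have ha₀C : a₀ ∈ C := ha₀.1
    have ha₀n : ‖a₀‖ = 1 := by
      have := ha₀.2
      rwa [mem_sphere_zero_iff_norm] at this
    have hcpos : 0 < c := by
      rcases (hgnn a₀).lt_or_eq with h | h
      · exact h
      · exfalso
        have haN : a₀ ∈ N := h.symm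
        have ha00 : a₀ = 0 := by
          have hdis := hC.disjoint
          rw [Submodule.disjoint_def] at hdis
          exact hdis a₀ haN ha₀C
        rw [ha00, norm_zero] at ha₀n
        norm_num at ha₀n
    have hCg : ∀ a, a ∈ C → c * ‖a‖ ≤ g a := by
      intro a haC
      rcases eq_or_ne a 0 with rfl | ha0
      · simp [hg0]
      · have h1 : (‖a‖⁻¹ • a) ∈ SC :=
          ⟨Submodule.smul_mem _ _ haC, by
            rw [mem_sphere_zero_iff_norm]; exact norm_smul_inv_norm ha0⟩
        have h2 : c ≤ g (‖a‖⁻¹ • a) := hmin h1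
        rw [hghom, abs_of_nonneg (inv_nonneg.2 (norm_nonneg a))] at h2
        have hna : 0 < ‖a‖ := norm_pos_iff.2 ha0
        calc c * ‖a‖ ≤ (‖a‖⁻¹ * g a) * ‖a‖ := mul_le_mul_of_nonneg_right h2 hna.le
          _ = g a := by field_simp
    -- constants
    set k : ℝ := ε / (1 + ε) with hk
    have h1ε : (0:ℝ) < 1 + ε := by linarith
    have hkpos : 0 < k := div_pos hε h1ε
    set M₀ : ℝ := c * k with hM₀
    have hM₀pos : 0 < M₀ := mul_pos hcpos hkpos
    set δ : ℝ := min 1 (M₀ / 2) with hδdef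
    have hδpos : 0 < δ := lt_min one_pos (by positivity)
    have hδ1 : δ ≤ 1 := min_le_left _ _
    have hδM : δ ≤ M₀ / 2 := min_le_right _ _
    set δ' : ℝ := M₀ / (2 * (2 * L + n + 1)) with hδ'def
    have hδ'pos : 0 < δ' := by positivity
    -- finite rational net of the unit sphere
    have hcover : Metric.sphere (0 : Fin n → ℝ) 1 ⊆
        ⋃ b : Fin n → ℚ, Metric.ball (cst b) δ' := by
      intro u _
      have hrat : ∀ i : Fin n, ∃ q : ℚ, |u i - (q : ℝ)| < δ' :=
        fun i => exists_rat_near (u i) hδ'pos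
      choose b hb using hrat
      refine Set.mem_iUnion.2 ⟨b, ?_⟩
      rw [Metric.mem_ball, dist_pi_lt_iff hδ'pos]
      intro i
      rw [Real.dist_eq]
      exact hb i
    obtain ⟨B, hB⟩ := (isCompact_sphere (0 : Fin n → ℝ) 1).elim_finite_subcover
      (fun b : Fin n → ℚ => Metric.ball (cst b) δ') (fun b => Metric.isOpen_ball) hcover
    -- the approximant μ from the closure
    set Bfull : Finset (Fin n → ℚ) :=
      B ∪ Finset.image (fun i : Fin n => (Pi.single i 1 : Fin n → ℚ)) Finset.univ with hBfull
    have hU := constraint_mem_nhds ν (Finset.image wv Bfull) hδpos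
    obtain ⟨μ, hμU, hμrep⟩ := mem_closure_iff_nhds.1 hν _ hU
    have hμclose : ∀ b ∈ Bfull, |μ.1 (wv b) - ν.1 (wv b)| < δ := by
      intro b hb
      exact hμU (wv b) (Finset.mem_image_of_mem wv hb)
    obtain ⟨T, Tadd, Tsmul, Tnorm, -⟩ := hμrep
    -- the linear map G and its norm function h
    set G : (Fin n → ℝ) →ₗ[ℝ] X :=
      { toFun := fun a => ∑ i, a i • T (v i)
        map_add' := by
          intro a a'
          simp only [Pi.add_apply, add_smul]
          rw [Finset.sum_add_distrib]
        map_smul' := by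
          intro t a
          simp only [Pi.smul_apply, smul_eq_mul, RingHom.id_apply, mul_smul]
          rw [Finset.smul_sum] } with hG
    have hGcst : ∀ b : Fin n → ℚ, G (cst b) = T (wv b) := by
      intro b
      show ∑ i, ((b i : ℚ) : ℝ) • T (v i) = T (∑ i, b i • v i)
      rw [Tmap_sum Tadd Tsmul]
    set h : (Fin n → ℝ) → ℝ := fun a => ‖G a‖ with hh
    have hhval : ∀ b : Fin n → ℚ, h (cst b) = μ.1 (wv b) := by
      intro b
      show ‖G (cst b)‖ = _
      rw [hGcst, Tnorm]
    have hμv : ∀ i : Fin n, μ.1 (v i) ≤ ν.1 (v i) + δ := by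
      intro i
      have hbm : (Pi.single i 1 : Fin n → ℚ) ∈ Bfull :=
        Finset.mem_union_right _ (Finset.mem_image_of_mem _ (Finset.mem_univ i))
      have h1 := hμclose _ hbm
      have h2 : wv (Pi.single i 1) = v i := by
        rw [hwv]
        simp only
        rw [Finset.sum_eq_single i]
        · simp
        · intro j _ hj
          rw [Pi.single_eq_of_ne hj, zero_smul]
        · intro hni; exact absurd (Finset.mem_univ _) hni
      rw [h2] at h1
      have h3 := abs_lt.1 h1
      linarith [h3.1, h3.2]
    have hhnorm : ∀ a, h a ≤ (L + n * δ) * ‖a‖ := by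
      intro a
      have step1 : h a ≤ ∑ i, |a i| * μ.1 (v i) := by
        show ‖G a‖ ≤ _
        calc ‖∑ i, a i • T (v i)‖ ≤ ∑ i, ‖a i • T (v i)‖ := norm_sum_le _ _
          _ = ∑ i, |a i| * μ.1 (v i) := by
              apply Finset.sum_congr rfl
              intro i _
              rw [norm_smul, Real.norm_eq_abs, Tnorm]
      calc h a ≤ ∑ i, |a i| * μ.1 (v i) := step1
        _ ≤ ∑ i, ‖a‖ * (ν.1 (v i) + δ) := by
            apply Finset.sum_le_sum
            intro i _
            have h5 : |a i| ≤ ‖a‖ := by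
              have := norm_le_pi_norm a i
              rwa [Real.norm_eq_abs] at this
            exact mul_le_mul h5 (hμv i) (qsem_nonneg μ.2 _) (norm_nonneg a)
        _ = (L + n * δ) * ‖a‖ := by
            rw [← Finset.mul_sum, Finset.sum_add_distrib, Finset.sum_const,
              Finset.card_univ, Fintype.card_fin, ← hL, nsmul_eq_mul, mul_comm]
    have hhdiff : ∀ a a', |h a - h a'| ≤ h (a - a') := by
      intro a a'
      show |‖G a‖ - ‖G a'‖| ≤ ‖G (a - a')‖
      rw [map_sub]
      exact abs_norm_sub_norm_le _ _
    have hhhom : ∀ (t : ℝ) (a : Fin n → ℝ), h (t • a) = |t| * h a := by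
      intro t a
      show ‖G (t • a)‖ = |t| * ‖G a‖
      rw [map_smul, norm_smul, Real.norm_eq_abs]
    -- bound on the unit sphere
    set M : ℝ := δ + (L + (L + n * δ)) * δ' with hM
    have hMs : ∀ u : Fin n → ℝ, ‖u‖ = 1 → |h u - g u| ≤ M := by
      intro u hu
      have humem : u ∈ Metric.sphere (0 : Fin n → ℝ) 1 := by
        rwa [mem_sphere_zero_iff_norm]
      obtain ⟨b, hbB, hub⟩ := Set.mem_iUnion₂.1 (hB humem)
      have hub' : ‖u - cst b‖ ≤ δ' := by
        rw [Metric.mem_ball, dist_eq_norm] at hub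
        exact hub.le
      have e1 : |h u - h (cst b)| ≤ (L + n * δ) * δ' := by
        calc |h u - h (cst b)| ≤ h (u - cst b) := hhdiff _ _
          _ ≤ (L + n * δ) * ‖u - cst b‖ := hhnorm _
          _ ≤ (L + n * δ) * δ' := by
              apply mul_le_mul_of_nonneg_left hub'
              positivity
      have e2 : |h (cst b) - g (cst b)| ≤ δ := by
        rw [hhval, hgval']
        exact (hμclose b (Finset.mem_union_left _ hbB)).le
      have e3 : |g (cst b) - g u| ≤ L * δ' := by
        calc |g (cst b) - g u| ≤ g (cst b - u) := hgdiff _ _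
          _ ≤ L * ‖cst b - u‖ := hgnorm _
          _ ≤ L * δ' := by
              apply mul_le_mul_of_nonneg_left _ hLnn
              rw [← norm_neg]
              simpa using hub'
      have t1 : |h u - g u| ≤ |h u - g (cst b)| + |g (cst b) - g u| := abs_sub_le _ _ _
      have t2 : |h u - g (cst b)| ≤ |h u - h (cst b)| + |h (cst b) - g (cst b)| :=
        abs_sub_le _ _ _
      have t3 : δ + (L + (L + n * δ)) * δ' = (L + n * δ) * δ' + δ + L * δ' := by ring
      rw [hM]
      linarith
    have hMM₀ : M ≤ M₀ := by
      have hLn1 : (0:ℝ) < 2 * L + n + 1 := by positivity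
      have he : (2 * L + (n : ℝ) + 1) * δ' = M₀ / 2 := by
        rw [hδ'def]
        field_simp
      have hstep : (L + (L + n * δ)) * δ' ≤ (2 * L + (n : ℝ) + 1) * δ' := by
        apply mul_le_mul_of_nonneg_right _ hδ'pos.le
        have : (n : ℝ) * δ ≤ n * 1 := by
          apply mul_le_mul_of_nonneg_left hδ1 (Nat.cast_nonneg n)
        linarith
      rw [hM]
      calc δ + (L + (L + n * δ)) * δ' ≤ M₀ / 2 + (2 * L + (n : ℝ) + 1) * δ' :=
            add_le_add hδM hstep
        _ = M₀ / 2 + M₀ / 2 := by rw [he]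
        _ = M₀ := by ring
    -- global bound by homogeneity
    have hMa : ∀ a : Fin n → ℝ, |h a - g a| ≤ M₀ * ‖a‖ := by
      intro a
      rcases eq_or_ne a 0 with rfl | ha0
      · have hh0 : h 0 = 0 := by
          show ‖G 0‖ = 0
          rw [map_zero, norm_zero]
        rw [hh0, hg0, sub_zero, abs_zero, norm_zero, mul_zero]
      · have hna : 0 < ‖a‖ := norm_pos_iff.2 ha0
        set u : Fin n → ℝ := ‖a‖⁻¹ • a with hu
        have hun : ‖u‖ = 1 := norm_smul_inv_norm ha0
        have hau : a = ‖a‖ • u := by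
          rw [hu, smul_inv_smul₀ (ne_of_gt hna)]
        have h1 : h a = ‖a‖ * h u := by
          conv_lhs => rw [hau]
          rw [hhhom, abs_of_pos hna]
        have h2 : g a = ‖a‖ * g u := by
          conv_lhs => rw [hau]
          rw [hghom, abs_of_pos hna]
        rw [h1, h2, ← mul_sub, abs_mul, abs_of_pos hna]
        calc ‖a‖ * |h u - g u| ≤ ‖a‖ * M := mul_le_mul_of_nonneg_left (hMs u hun) hna.le
          _ ≤ ‖a‖ * M₀ := mul_le_mul_of_nonneg_left hMM₀ hna.le
          _ = M₀ * ‖a‖ := mul_comm _ _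
    -- conclusion
    refine ⟨fun i => G (P ((Pi.single i (1 : ℝ) : Fin n → ℝ))), ?_⟩
    intro a
    have hrepa : cst a = ∑ i, (a i : ℝ) • (Pi.single i (1 : ℝ) : Fin n → ℝ) := by
      funext j
      rw [Finset.sum_apply]
      rw [Finset.sum_eq_single j]
      · simp [hcst]
      · intro i _ hij
        rw [Pi.smul_apply, Pi.single_eq_of_ne (Ne.symm hij), smul_eq_mul, mul_zero]
      · intro hnj; exact absurd (Finset.mem_univ _) hnj
    have hsum : ∑ i, (a i : ℝ) • G (P ((Pi.single i (1 : ℝ) : Fin n → ℝ))) = G (P (cst a)) := by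
      rw [hrepa, map_sum, map_sum]
      apply Finset.sum_congr rfl
      intro i _
      rw [map_smul, map_smul]
    rw [hsum]
    have hPa := hgP (cst a)
    have hgcst : g (cst a) = ν.1 (∑ i, a i • v i) := hgval a
    have hPaC := hPmem (cst a)
    have hPanorm : c * ‖P (cst a)‖ ≤ g (cst a) := by
      have := hCg (P (cst a)) hPaC
      rwa [hPa] at this
    have hdiff : |h (P (cst a)) - g (cst a)| ≤ k * g (cst a) := by
      have h1 := hMa (P (cst a))
      rw [hPa] at h1
      calc |h (P (cst a)) - g (cst a)| ≤ M₀ * ‖P (cst a)‖ := h1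
        _ = k * (c * ‖P (cst a)‖) := by rw [hM₀]; ring
        _ ≤ k * g (cst a) := mul_le_mul_of_nonneg_left hPanorm hkpos.le
    have hnormGP : ‖G (P (cst a))‖ = h (P (cst a)) := rfl
    have habs := abs_le.1 hdiff
    have hgnn' : 0 ≤ g (cst a) := hgnn _
    constructor
    · -- lower bound
      rw [hnormGP, ← hgcst]
      have hone : (1 + ε)⁻¹ = 1 - k := by
        rw [hk]
        field_simp
        ring
      rw [hone]
      have : (1 - k) * g (cst a) = g (cst a) - k * g (cst a) := by ring
      rw [this]
      linarith [habs.1]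
    · -- upper bound
      rw [hnormGP, ← hgcst]
      have hkε : k ≤ ε := by
        rw [hk]
        exact div_le_self hε.le (by linarith)
      have h6 : k * g (cst a) ≤ ε * g (cst a) :=
        mul_le_mul_of_nonneg_right hkε hgnn'
      have h7 : (1 + ε) * g (cst a) = g (cst a) + ε * g (cst a) := by ring
      linarith [habs.2]

lemma setB_subset_setPinf : SetB ⊆ SetPinf := by
  intro μ hμ n
  obtain ⟨c, hc, h⟩ := hμ n
  exact ⟨fun i => eV i, c, hc, h⟩

end Stmt2Aux

open Stmt2Aux in
/-- For a separable infinite-dimensional Banach space `X`, the set of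
`ν ∈ ℬ` whose induced space is finitely representable in `X` is exactly the closure in `ℬ`
of the isometry class of `X`; likewise in `𝒫_∞` and in `𝒫`. -/
theorem statement2 (X : Type*) [NormedAddCommGroup X] [NormedSpace ℝ X] [CompleteSpace X]
    [TopologicalSpace.SeparableSpace X] (hinf : ¬FiniteDimensional ℝ X) :
    ({ν : ↥SetB | FinRepInX X ν.1} = closure {ν : ↥SetB | RepIsometric X ν.1}) ∧
    ({ν : ↥SetPinf | FinRepInX X ν.1} = closure {ν : ↥SetPinf | RepIsometric X ν.1}) ∧
    ({ν : SpaceP | FinRepInX X ν} = closure {ν : SpaceP | RepIsometric X ν}) := by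
  have key : ∀ (S : Set SpaceP), (∀ μ : SpaceP, RepIsometric X μ → μ ∈ SetB → μ ∈ S) →
      ({ν : ↥S | FinRepInX X ν.1} = closure {ν : ↥S | RepIsometric X ν.1}) := by
    intro S hS
    ext ν
    simp only [Set.mem_setOf_eq]
    constructor
    · intro hν
      rw [closure_subtype]
      rw [mem_closure_iff_nhds]
      intro t ht
      obtain ⟨I, ε, hε, hI⟩ := exists_finset_of_mem_nhds ht
      obtain ⟨μ, hrep, hB, hclose⟩ := approx_rep hinf ν.1 hν I hε
      refine ⟨μ, hI μ hclose, ⟨μ, hS μ hrep hB⟩, hrep, rfl⟩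
    · intro hν
      rw [closure_subtype] at hν
      have : (ν : SpaceP) ∈ closure {μ : SpaceP | RepIsometric X μ} := by
        refine closure_mono ?_ hν
        rintro μ ⟨ρ, hρ, rfl⟩
        exact hρ
      exact finrep_of_closure _ this
  refine ⟨key SetB (fun μ _ h => h), key SetPinf (fun μ _ h => setB_subset_setPinf h), ?_⟩
  ext ν
  simp only [Set.mem_setOf_eq]
  constructor
  · intro hν
    rw [mem_closure_iff_nhds]
    intro t ht
    obtain ⟨I, ε, hε, hI⟩ := exists_finset_of_mem_nhds ht
    obtain ⟨μ, hrep, _, hclose⟩ := approx_rep hinf ν hν I hε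
    exact ⟨μ, hI μ hclose, hrep⟩
  · exact finrep_of_closure ν
end
end

section
/- Let L be a compact metric space, let p ∈ [1,∞), and let (g_i)_{i∈ℕ} be a sequence in C(L,ℝ) whose linear span is dense in C(L,ℝ). For a Borel probability measure λ on L define σ(λ) ∈ 𝒫 by σ(λ)(r₁e₁+⋯+rₙeₙ) = (∫_L |r₁g₁+⋯+rₙgₙ|^p dλ)^{1/p} for all rational r₁,…,rₙ. Then σ is a continuous map from the space of Borel probability measures on L, equipped with the topology of weak convergence (generated by integration of continuous functions), to 𝒫; and for every λ the seminorm σ(λ) represents the Banach space L_p(λ) isometrically. -/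
open Filter Topology

noncomputable section

namespace S3Aux

variable {L : Type*} [TopologicalSpace L]

def fmap (g : ℕ → C(L, ℝ)) (v : V) : C(L, ℝ) := v.sum fun i q => (q : ℝ) • g i

lemma fmap_add (g : ℕ → C(L, ℝ)) (v w : V) : fmap g (v + w) = fmap g v + fmap g w :=
  Finsupp.sum_add_index' (fun i => by simp) (fun i q r => by push_cast; rw [add_smul])

lemma fmap_smul (g : ℕ → C(L, ℝ)) (q : ℚ) (v : V) : fmap g (q • v) = (q : ℝ) • fmap g v := by
  unfold fmap
  rw [Finsupp.sum_smul_index' (fun i => by simp), Finsupp.smul_sum]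
  refine Finsupp.sum_congr fun i _ => ?_
  rw [smul_eq_mul]; push_cast; rw [mul_smul]

lemma fmap_apply (g : ℕ → C(L, ℝ)) (v : V) (t : L) :
    fmap g v t = ∑ i ∈ v.support, (v i : ℝ) * g i t := by
  simp [fmap, Finsupp.sum, smul_eq_mul]

lemma fmap_eV (g : ℕ → C(L, ℝ)) (i : ℕ) : fmap g (eV i) = g i := by
  simp [fmap, eV, Finsupp.sum_single_index]

end S3Aux

open S3Aux MeasureTheory
open scoped ENNReal NNReal

/-- For a compact metric space `L`, `p ∈ [1,∞)` and a sequence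
`(gᵢ)` in `C(L,ℝ)` with dense linear span, the map `σ` sending a Borel probability
measure `λ` on `L` to the pseudonorm `σ(λ)(∑ rᵢ eᵢ) = (∫ |∑ rᵢ gᵢ|^p dλ)^{1/p}` is a
continuous map from probability measures (weak topology) to `𝒫`, and `σ(λ)` represents
`L_p(λ)` isometrically. -/
theorem statement3 (L : Type*) [MetricSpace L] [CompactSpace L]
    [MeasurableSpace L] [BorelSpace L]
    (p : ℝ) (hp : 1 ≤ p) [Fact (1 ≤ ENNReal.ofReal p)]
    (g : ℕ → C(L, ℝ))
    (hg : Dense (Submodule.span ℝ (Set.range g) : Set C(L, ℝ))) :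
    ∃ σ : MeasureTheory.ProbabilityMeasure L → SpaceP,
      (∀ (ν : MeasureTheory.ProbabilityMeasure L) (v : V),
        (σ ν).1 v =
          (∫ t, |∑ i ∈ v.support, (v i : ℝ) * g i t| ^ p
              ∂(ν : MeasureTheory.Measure L)) ^ (1 / p)) ∧
      Continuous σ ∧
      ∀ ν : MeasureTheory.ProbabilityMeasure L,
        RepIsometric
          (MeasureTheory.Lp ℝ (ENNReal.ofReal p) (ν : MeasureTheory.Measure L)) (σ ν) := by

  have hp0 : 0 < p := lt_of_lt_of_le one_pos hp
  set P : ℝ≥0∞ := ENNReal.ofReal p with hP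
  have hP0 : P ≠ 0 := by
    simp [hP, ENNReal.ofReal_eq_zero, not_le, hp0]
  have hPtop : P ≠ ∞ := ENNReal.ofReal_ne_top
  have hPtoReal : P.toReal = p := ENNReal.toReal_ofReal hp0.le
  have key : ∀ (ν : ProbabilityMeasure L) (v : V),
      ‖ContinuousMap.toLp P (ν : Measure L) ℝ (fmap g v)‖
        = (∫ t, |∑ i ∈ v.support, (v i : ℝ) * g i t| ^ p ∂(ν : Measure L)) ^ (1 / p) := by
    intro ν v
    have hae : ContinuousMap.toLp P (ν : Measure L) ℝ (fmap g v) =ᵐ[(ν : Measure L)] fmap g v :=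
      ContinuousMap.coeFn_toLp (ν : Measure L) (fmap g v)
    have hmem : MemLp (fmap g v) P (ν : Measure L) :=
      (memLp_congr_ae hae).mp (Lp.memLp _)
    rw [Lp.norm_def, eLpNorm_congr_ae hae,
      hmem.eLpNorm_eq_integral_rpow_norm hP0 hPtop,
      ENNReal.toReal_ofReal
        (Real.rpow_nonneg (integral_nonneg fun a => by positivity) _)]
    simp only [hPtoReal, Real.norm_eq_abs, fmap_apply, one_div]
  refine ⟨fun ν => ⟨fun v => ‖ContinuousMap.toLp P (ν : Measure L) ℝ (fmap g v)‖,
    fun q v => by beta_reduce; rw [fmap_smul, _root_.map_smul, norm_smul, Real.norm_eq_abs],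
    fun v w => by beta_reduce; rw [fmap_add, map_add]; exact norm_add_le _ _⟩, key, ?_, ?_⟩
  · -- continuity
    refine Continuous.subtype_mk (continuous_pi fun v => ?_) _
    simp only [key]
    have hcf : Continuous fun t : L => |∑ i ∈ v.support, (v i : ℝ) * g i t| ^ p := by
      refine Continuous.rpow_const ?_ fun x => Or.inr hp0.le
      exact (continuous_finset_sum _ fun i _ => continuous_const.mul (g i).continuous).abs
    have hbc := MeasureTheory.ProbabilityMeasure.continuous_integral_boundedContinuousFunction
      (BoundedContinuousFunction.mkOfCompact ⟨_, hcf⟩)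
    exact hbc.rpow_const fun x => Or.inr (by positivity)
  · -- representation
    intro ν
    refine ⟨fun v => ContinuousMap.toLp P (ν : Measure L) ℝ (fmap g v),
      fun v w => by beta_reduce; rw [fmap_add, map_add],
      fun q v => by beta_reduce; rw [fmap_smul, _root_.map_smul],
      fun v => rfl, ?_⟩
    have hdr : DenseRange (ContinuousMap.toLp P (ν : Measure L) ℝ) :=
      ContinuousMap.toLp_denseRange ℝ (ν : Measure L) ℝ hPtop
    have h1 : Dense ((ContinuousMap.toLp P (ν : Measure L) ℝ) ''
        (Submodule.span ℝ (Set.range g) : Set C(L, ℝ))) :=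
      hdr.dense_image (ContinuousMap.toLp P (ν : Measure L) ℝ).continuous hg
    refine h1.mono ?_
    have hsub : (ContinuousMap.toLp P (ν : Measure L) ℝ) '' Set.range g ⊆
        Set.range fun v => ContinuousMap.toLp P (ν : Measure L) ℝ (fmap g v) := by
      rintro - ⟨-, ⟨i, rfl⟩, rfl⟩
      exact ⟨eV i, by simp only [fmap_eV]⟩
    calc (ContinuousMap.toLp P (ν : Measure L) ℝ) ''
          (Submodule.span ℝ (Set.range g) : Set C(L, ℝ))
        = (Submodule.map (ContinuousMap.toLp P (ν : Measure L) ℝ).toLinearMap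
            (Submodule.span ℝ (Set.range g)) : Set (Lp ℝ P (ν : Measure L))) := rfl
      _ = (Submodule.span ℝ ((ContinuousMap.toLp P (ν : Measure L) ℝ) '' Set.range g) :
            Set (Lp ℝ P (ν : Measure L))) := by rw [Submodule.map_span]; rfl
      _ ⊆ _ := Submodule.span_mono hsub
end
end
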